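/- If a real Banach space X is not rotund, then there exist x₁ ≠ x₂ in S_X such that the whole segment [x₁,x₂] is contained in Q_{S_X}(−(x₁+x₂)); in particular S_X fails to be uniquely remotal at some point outside the closed unit ball. -/

import Mathlib

/-- The set of farthest points of the unit sphere from `w`,
using `r(S_X, w) = 1 + ‖w‖`. -/
def QS0 {X : Type*} [NormedAddCommGroup X] (w : X) : Set X :=
  {y | ‖y‖ = 1 ∧ ‖w - y‖ = 1 + ‖w‖}

lemma key_combo {X : Type*} [NormedAddCommGroup X] [NormedSpace ℝ X]
    {x₁ x₂ : X} (h1 : ‖x₁‖ = 1) (h2 : ‖x₂‖ = 1) (hs : ‖x₁ + x₂‖ = 2)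
    {a b : ℝ} (ha : 0 ≤ a) (hb : 0 ≤ b) (hab : a + b = 1) :
    ‖a • x₁ + b • x₂‖ = 1 := by
  have hle : ‖a • x₁ + b • x₂‖ ≤ 1 := by
    calc ‖a • x₁ + b • x₂‖ ≤ ‖a • x₁‖ + ‖b • x₂‖ := norm_add_le _ _
      _ = a + b := by
          rw [norm_smul, norm_smul, h1, h2, Real.norm_of_nonneg ha, Real.norm_of_nonneg hb]; ring
      _ = 1 := hab
  have hge : 1 ≤ ‖a • x₁ + b • x₂‖ := by
    rcases le_total b a with hba | hba
    · have hE : a • (x₁ + x₂) = (a • x₁ + b • x₂) + (a - b) • x₂ := by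
        rw [smul_add]; module
      have h2a : ‖a • (x₁ + x₂)‖ = 2 * a := by
        rw [norm_smul, hs, Real.norm_of_nonneg ha]; ring
      have htr := norm_add_le (a • x₁ + b • x₂) ((a - b) • x₂)
      rw [← hE, h2a, norm_smul, h2, Real.norm_of_nonneg (by linarith)] at htr
      linarith
    · have hE : b • (x₁ + x₂) = (a • x₁ + b • x₂) + (b - a) • x₁ := by
        rw [smul_add]; module
      have h2b : ‖b • (x₁ + x₂)‖ = 2 * b := by
        rw [norm_smul, hs, Real.norm_of_nonneg hb]; ring
      have htr := norm_add_le (a • x₁ + b • x₂) ((b - a) • x₁)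
      rw [← hE, h2b, norm_smul, h1, Real.norm_of_nonneg (by linarith)] at htr
      linarith
  linarith

theorem stmt13 {X : Type*} [NormedAddCommGroup X] [NormedSpace ℝ X] [CompleteSpace X]
    (h : ¬ ∀ x₁ x₂ : X, ‖x₁‖ = 1 → ‖x₂‖ = 1 → x₁ ≠ x₂ → ‖(1 / 2 : ℝ) • (x₁ + x₂)‖ < 1) :
    ∃ x₁ x₂ : X, ‖x₁‖ = 1 ∧ ‖x₂‖ = 1 ∧ x₁ ≠ x₂ ∧
      segment ℝ x₁ x₂ ⊆ QS0 (-(x₁ + x₂)) ∧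
      1 < ‖-(x₁ + x₂)‖ ∧ ¬ (QS0 (-(x₁ + x₂))).Subsingleton := by
  push_neg at h
  obtain ⟨x₁, x₂, h1, h2, hne, hge⟩ := h
  have hs : ‖x₁ + x₂‖ = 2 := by
    rw [norm_smul] at hge
    have hle : ‖x₁ + x₂‖ ≤ 2 := by
      have := norm_add_le x₁ x₂; rw [h1, h2] at this; linarith
    have hh : ‖((1:ℝ)/2)‖ = 1/2 := by rw [Real.norm_of_nonneg]; norm_num
    rw [hh] at hge
    linarith
  have hwnorm : ‖-(x₁ + x₂)‖ = 2 := by rw [norm_neg, hs]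
  have hsub : segment ℝ x₁ x₂ ⊆ QS0 (-(x₁ + x₂)) := by
    rintro y ⟨a, b, ha, hb, hab, rfl⟩
    constructor
    · exact key_combo h1 h2 hs ha hb hab
    · have hE : -(x₁ + x₂) - (a • x₁ + b • x₂)
          = (-3 : ℝ) • (((1 + a) / 3) • x₁ + ((1 + b) / 3) • x₂) := by
        have h3 : (3:ℝ) ≠ 0 := by norm_num
        rw [smul_add, smul_smul, smul_smul]
        rw [show (-3:ℝ) * ((1+a)/3) = -(1+a) by field_simp,
            show (-3:ℝ) * ((1+b)/3) = -(1+b) by field_simp]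
        module
      have hk : ‖((1 + a) / 3 : ℝ) • x₁ + ((1 + b) / 3 : ℝ) • x₂‖ = 1 :=
        key_combo h1 h2 hs (by linarith) (by linarith) (by field_simp; linarith)
      rw [hE, norm_smul, hk, hwnorm]
      norm_num
  refine ⟨x₁, x₂, h1, h2, hne, hsub, by rw [hwnorm]; norm_num, ?_⟩
  intro hss
  have m1 : x₁ ∈ QS0 (-(x₁ + x₂)) := hsub (left_mem_segment ℝ x₁ x₂)
  have m2 : x₂ ∈ QS0 (-(x₁ + x₂)) := hsub (right_mem_segment ℝ x₁ x₂)
  exact hne (hss m1 m2)
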